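/- There is a bijection between (isomorphism classes of) unbalanced split graphs on n vertices and (isomorphism classes of) split graphs on at most n − 1 vertices: given an unbalanced split graph with S-max KS-partition and swing vertex s ∈ S, delete s and all vertices of K with no neighbor in S − {s}; the inverse adds a new swing vertex adjacent to a suitably enlarged clique. -/

import Mathlib

open SimpleGraph
attribute [local instance] Classical.propDecidable

variable {V : Type*} [Fintype V] [DecidableEq V]

/-- A set of vertices is stable (independent) if no two of its elements are adjacent. -/
def IsStableSet (G : SimpleGraph V) (s : Set V) : Prop :=
  s.Pairwise fun a b => ¬ G.Adj a b

/-- The clique number ω(G). -/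
noncomputable def omegaNum (G : SimpleGraph V) : ℕ :=
  Finset.univ.sup fun s : Finset V => if G.IsClique (s : Set V) then s.card else 0

/-- The independence number α(G). -/
noncomputable def alphaNum (G : SimpleGraph V) : ℕ :=
  Finset.univ.sup fun s : Finset V => if IsStableSet G (s : Set V) then s.card else 0

/-- A KS-partition of `G`: a partition of the vertex set into a clique `K` and a stable set `S`. -/
def IsKSPartition (G : SimpleGraph V) (K S : Finset V) : Prop :=
  Disjoint K S ∧ K ∪ S = Finset.univ ∧ G.IsClique (K : Set V) ∧ IsStableSet G (S : Set V)

/-- `G` is a split graph. -/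
def IsSplit (G : SimpleGraph V) : Prop := ∃ K S : Finset V, IsKSPartition G K S

/-- A split graph is balanced if it has a KS-partition with `|K| = ω(G)` and `|S| = α(G)`. -/
def IsBalanced (G : SimpleGraph V) : Prop :=
  ∃ K S : Finset V, IsKSPartition G K S ∧ K.card = omegaNum G ∧ S.card = alphaNum G

/-- Isomorphism of unbalanced split graphs on `Fin n`. -/
def USplitIsoRel (n : ℕ)
    (G H : {G : SimpleGraph (Fin n) // IsSplit G ∧ ¬ IsBalanced G}) : Prop :=
  Nonempty (G.1 ≃g H.1)

/-- Isomorphism of split graphs on vertex sets of size `t ≤ n − 1`. -/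
def SmallSplitRel (n : ℕ)
    (G H : Σ t : Fin n, {G : SimpleGraph (Fin t.val) // IsSplit G}) : Prop :=
  Nonempty (G.2.1 ≃g H.2.1)


/- ### Basic lemmas -/

section Basics
variable {G : SimpleGraph V}

lemma stable_card_le_alpha {T : Finset V} (hT : IsStableSet G (T : Set V)) :
    T.card ≤ alphaNum G := by
  have := Finset.le_sup (f := fun s : Finset V => if IsStableSet G (s : Set V) then s.card else 0)
    (Finset.mem_univ T)
  simpa [hT, alphaNum] using this

lemma clique_card_le_omega {C : Finset V} (hC : G.IsClique (C : Set V)) :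
    C.card ≤ omegaNum G := by
  have := Finset.le_sup (f := fun s : Finset V => if G.IsClique (s : Set V) then s.card else 0)
    (Finset.mem_univ C)
  simpa [hC, omegaNum] using this

lemma exists_alpha_set (G : SimpleGraph V) :
    ∃ T : Finset V, IsStableSet G (T : Set V) ∧ T.card = alphaNum G := by
  classical
  obtain ⟨T, -, hT⟩ := Finset.exists_mem_eq_sup Finset.univ ⟨∅, Finset.mem_univ ∅⟩
    (fun s : Finset V => if IsStableSet G (s : Set V) then s.card else 0)
  by_cases h : IsStableSet G (T : Set V)
  · exact ⟨T, h, by simp [alphaNum, hT, h]⟩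
  · refine ⟨∅, by simp [IsStableSet], ?_⟩
    simp only [alphaNum, hT, h, if_false, Finset.card_empty]

lemma exists_omega_set (G : SimpleGraph V) :
    ∃ C : Finset V, G.IsClique (C : Set V) ∧ C.card = omegaNum G := by
  classical
  obtain ⟨T, -, hT⟩ := Finset.exists_mem_eq_sup Finset.univ ⟨∅, Finset.mem_univ ∅⟩
    (fun s : Finset V => if G.IsClique (s : Set V) then s.card else 0)
  by_cases h : G.IsClique (T : Set V)
  · exact ⟨T, h, by simp [omegaNum, hT, h]⟩
  · refine ⟨∅, by simp, ?_⟩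
    simp only [omegaNum, hT, h, if_false, Finset.card_empty]

lemma IsKSPartition.card_add {K S : Finset V} (h : IsKSPartition G K S) :
    K.card + S.card = Fintype.card V := by
  rw [← Finset.card_union_of_disjoint h.1, h.2.1, Finset.card_univ]

/-- If there is a clique and a stable set jointly larger than the vertex count,
the graph is unbalanced. -/
lemma unbalanced_of_big (C T : Finset V) (hC : G.IsClique (C : Set V))
    (hT : IsStableSet G (T : Set V)) (h : Fintype.card V < C.card + T.card) :
    ¬ IsBalanced G := by
  rintro ⟨K, S, hp, hK, hS⟩
  have h1 : C.card ≤ omegaNum G := clique_card_le_omega hC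
  have h2 : T.card ≤ alphaNum G := stable_card_le_alpha hT
  have := hp.card_add
  omega

end Basics

set_option linter.unusedSectionVars false
set_option linter.unusedVariables false
set_option maxHeartbeats 1000000

/- ### Transport along isomorphisms -/

section Transport
variable {W : Type*} [Fintype W] [DecidableEq W]
variable {G : SimpleGraph V} {H : SimpleGraph W}

lemma SimpleGraph.Iso.image_stable (φ : G ≃g H) {T : Finset V}
    (h : IsStableSet G (T : Set V)) :
    IsStableSet H ((T.image φ : Finset W) : Set W) := by
  rintro a ha b hb hab
  simp only [Finset.coe_image, Set.mem_image, Finset.mem_coe] at ha hb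
  obtain ⟨x, hx, rfl⟩ := ha
  obtain ⟨y, hy, rfl⟩ := hb
  have hxy : x ≠ y := fun e => hab (by rw [e])
  have := h hx hy hxy
  rw [φ.map_adj_iff]
  exact this

lemma SimpleGraph.Iso.image_clique (φ : G ≃g H) {T : Finset V} (h : G.IsClique (T : Set V)) :
    H.IsClique ((T.image φ : Finset W) : Set W) := by
  rintro a ha b hb hab
  simp only [Finset.coe_image, Set.mem_image, Finset.mem_coe] at ha hb
  obtain ⟨x, hx, rfl⟩ := ha
  obtain ⟨y, hy, rfl⟩ := hb
  have hxy : x ≠ y := fun e => hab (by rw [e])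
  have := h hx hy hxy
  rw [φ.map_adj_iff]
  exact this

lemma SimpleGraph.Iso.image_union_univ (φ : G ≃g H) {K S : Finset V}
    (h : K ∪ S = Finset.univ) : K.image φ ∪ S.image φ = Finset.univ := by
  rw [← Finset.image_union, h]
  apply Finset.eq_univ_of_forall
  intro w
  rw [Finset.mem_image]
  exact ⟨φ.symm w, Finset.mem_univ _, φ.apply_symm_apply w⟩

lemma SimpleGraph.Iso.image_partition (φ : G ≃g H) {K S : Finset V}
    (h : IsKSPartition G K S) : IsKSPartition H (K.image φ) (S.image φ) := by
  refine ⟨?_, φ.image_union_univ h.2.1, φ.image_clique h.2.2.1, φ.image_stable h.2.2.2⟩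
  exact (Finset.disjoint_image φ.injective).mpr h.1

lemma SimpleGraph.Iso.alpha_le (φ : G ≃g H) : alphaNum G ≤ alphaNum H := by
  obtain ⟨T, hT, hc⟩ := exists_alpha_set G
  rw [← hc]
  have := stable_card_le_alpha (φ.image_stable hT)
  rwa [Finset.card_image_of_injective _ φ.injective] at this

lemma SimpleGraph.Iso.alpha_eq (φ : G ≃g H) : alphaNum G = alphaNum H :=
  le_antisymm φ.alpha_le φ.symm.alpha_le

lemma SimpleGraph.Iso.omega_le (φ : G ≃g H) : omegaNum G ≤ omegaNum H := by
  obtain ⟨T, hT, hc⟩ := exists_omega_set G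
  rw [← hc]
  have := clique_card_le_omega (φ.image_clique hT)
  rwa [Finset.card_image_of_injective _ φ.injective] at this

lemma SimpleGraph.Iso.omega_eq (φ : G ≃g H) : omegaNum G = omegaNum H :=
  le_antisymm φ.omega_le φ.symm.omega_le

lemma SimpleGraph.Iso.isSplit (φ : G ≃g H) (h : IsSplit G) : IsSplit H := by
  obtain ⟨K, S, hp⟩ := h
  exact ⟨K.image φ, S.image φ, φ.image_partition hp⟩

lemma SimpleGraph.Iso.isBalanced (φ : G ≃g H) (h : IsBalanced G) : IsBalanced H := by
  obtain ⟨K, S, hp, hK, hS⟩ := h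
  refine ⟨K.image φ, S.image φ, φ.image_partition hp, ?_, ?_⟩
  · rw [Finset.card_image_of_injective _ φ.injective, hK, φ.omega_eq]
  · rw [Finset.card_image_of_injective _ φ.injective, hS, φ.alpha_eq]

end Transport

/- ### Relabelling a graph along an equivalence of vertex types -/

section Relabel
variable {W : Type*}

def relabel (G : SimpleGraph V) (e : V ≃ W) : SimpleGraph W where
  Adj a b := G.Adj (e.symm a) (e.symm b)
  symm := ⟨fun a b h => G.adj_symm h⟩
  loopless := ⟨fun a h => G.irrefl h⟩

def relabelIso (G : SimpleGraph V) (e : V ≃ W) : G ≃g relabel G e :=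
  ⟨e, by intro a b; simp [relabel]⟩

end Relabel

def idIso (G : SimpleGraph V) : G ≃g G := ⟨Equiv.refl V, Iff.rfl⟩

/- ### Swapping twins is an automorphism -/

def swapIso (G : SimpleGraph V) (x y : V)
    (h : ∀ z, z ≠ x → z ≠ y → (G.Adj x z ↔ G.Adj y z)) : G ≃g G := by
  refine ⟨Equiv.swap x y, ?_⟩
  have key : ∀ a b, G.Adj (Equiv.swap x y a) (Equiv.swap x y b) → G.Adj a b := by
    intro a b hab
    by_cases hax : a = x <;> by_cases hay : a = y <;>
      by_cases hbx : b = x <;> by_cases hby : b = y <;>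
      subst_vars <;>
      simp_all [Equiv.swap_apply_left, Equiv.swap_apply_right, Equiv.swap_apply_of_ne_of_ne] <;>
      first
        | exact hab
        | exact G.adj_symm hab
        | exact (h _ hbx hby).1 hab
        | exact (h _ hbx hby).2 hab
        | exact G.adj_symm ((h _ hbx hby).1 (G.adj_symm hab))
        | exact G.adj_symm ((h _ hbx hby).2 (G.adj_symm hab))
        | exact G.adj_symm ((h _ hax hay).1 (G.adj_symm hab))
        | exact G.adj_symm ((h _ hax hay).2 (G.adj_symm hab))
        | exact (h _ hax hay).1 hab
        | exact (h _ hax hay).2 hab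
        | exact absurd hab (G.irrefl)
  intro a b
  constructor
  · exact key a b
  · intro hab
    have := key (Equiv.swap x y a) (Equiv.swap x y b)
    simp only [Equiv.swap_apply_self] at this
    exact this hab

/- ### Structure of S-max partitions -/

section Structure
variable {G : SimpleGraph V}

lemma clique_stable_inter {C T : Finset V} (hC : G.IsClique (C : Set V))
    (hT : IsStableSet G (T : Set V)) : (C ∩ T).card ≤ 1 := by
  rw [Finset.card_le_one]
  intro a ha b hb
  rw [Finset.mem_inter] at ha hb
  by_contra hne
  exact hT ha.2 hb.2 hne (hC ha.1 hb.1 hne)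

lemma stable_insert {T : Finset V} {y : V} (hT : IsStableSet G (T : Set V))
    (hy : ∀ z ∈ T, ¬ G.Adj y z) : IsStableSet G ((insert y T : Finset V) : Set V) := by
  intro a ha b hb hab
  simp only [Finset.coe_insert, Set.mem_insert_iff, Finset.mem_coe] at ha hb
  rcases ha with rfl | ha <;> rcases hb with rfl | hb
  · exact absurd rfl hab
  · exact hy b hb
  · exact fun h => hy a ha (G.adj_symm h)
  · exact hT ha hb hab

/-- Every split graph has an S-max KS-partition. -/
lemma smax_exists (h : IsSplit G) :
    ∃ K S : Finset V, IsKSPartition G K S ∧ S.card = alphaNum G := by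
  obtain ⟨K, S, hp⟩ := h
  rcases eq_or_lt_of_le (stable_card_le_alpha hp.2.2.2) with heq | hlt
  · exact ⟨K, S, hp, heq⟩
  · -- α = |S| + 1 and we can move one vertex of K into S
    obtain ⟨T, hT, hTc⟩ := exists_alpha_set G
    have hTK : (T ∩ K).card ≤ 1 := by
      rw [Finset.inter_comm T K]; exact clique_stable_inter hp.2.2.1 hT
    have hsplitT : T = (T ∩ K) ∪ (T ∩ S) := by
      rw [← Finset.inter_union_distrib_left, hp.2.1, Finset.inter_univ]
    have h2 : T.card ≤ (T ∩ K).card + (T ∩ S).card := by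
      calc T.card = (T ∩ K ∪ T ∩ S).card := by rw [← hsplitT]
        _ ≤ (T ∩ K).card + (T ∩ S).card := Finset.card_union_le _ _
    have h3 : (T ∩ S).card ≤ S.card := Finset.card_le_card Finset.inter_subset_right
    have hTcard : T.card ≤ 1 + S.card := by omega
    have halpha : alphaNum G = S.card + 1 := by omega
    -- T contains S and exactly one vertex k of K
    have hTS : (T ∩ S).card = S.card := by omega
    have hTSeq : T ∩ S = S :=
      Finset.eq_of_subset_of_card_le Finset.inter_subset_right (le_of_eq hTS.symm)
    have hST : S ⊆ T := by
      intro z hz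
      exact (Finset.mem_inter.mp (hTSeq.symm ▸ hz)).1
    have hTKne : (T ∩ K).Nonempty := by
      rw [← Finset.card_pos]; omega
    obtain ⟨k, hk⟩ := hTKne
    rw [Finset.mem_inter] at hk
    have hkS : k ∉ S := fun hkS => (Finset.disjoint_left.mp hp.1) hk.2 hkS
    have hknadj : ∀ z ∈ S, ¬ G.Adj k z := by
      intro z hz
      exact hT hk.1 (hST hz) (fun e => hkS (e ▸ hz))
    refine ⟨K.erase k, insert k S, ⟨?_, ?_, ?_, stable_insert hp.2.2.2 hknadj⟩, ?_⟩
    · rw [Finset.disjoint_left]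
      intro a ha
      rw [Finset.mem_erase] at ha
      rw [Finset.mem_insert]
      rintro (rfl | haS)
      · exact ha.1 rfl
      · exact (Finset.disjoint_left.mp hp.1) ha.2 haS
    · apply Finset.eq_univ_of_forall
      intro v
      have := hp.2.1
      rcases Finset.mem_union.mp (this ▸ Finset.mem_univ v) with hv | hv
      · by_cases hvk : v = k
        · subst hvk; exact Finset.mem_union_right _ (Finset.mem_insert_self v S)
        · exact Finset.mem_union_left _ (Finset.mem_erase.mpr ⟨hvk, hv⟩)
      · exact Finset.mem_union_right _ (Finset.mem_insert_of_mem hv)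
    · exact hp.2.2.1.subset (by rw [Finset.coe_subset]; exact Finset.erase_subset _ _)
    · rw [Finset.card_insert_of_notMem hkS, halpha]

/-- In an S-max partition every clique vertex has a neighbour in `S`. -/
lemma k_has_neighbor {K S : Finset V} (hp : IsKSPartition G K S)
    (hS : S.card = alphaNum G) {k : V} (hk : k ∈ K) : ∃ z ∈ S, G.Adj k z := by
  by_contra hno
  push_neg at hno
  have hkS : k ∉ S := fun h => (Finset.disjoint_left.mp hp.1) hk h
  have : IsStableSet G ((insert k S : Finset V) : Set V) := stable_insert hp.2.2.2 hno
  have := stable_card_le_alpha this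
  rw [Finset.card_insert_of_notMem hkS, hS] at this
  omega

/-- In an unbalanced split graph, every S-max partition has a swing vertex. -/
lemma swing_exists {K S : Finset V} (hp : IsKSPartition G K S)
    (hS : S.card = alphaNum G) (hub : ¬ IsBalanced G) :
    ∃ s ∈ S, ∀ k ∈ K, G.Adj s k := by
  have hKlt : K.card < omegaNum G := by
    rcases lt_or_eq_of_le (clique_card_le_omega hp.2.2.1) with h | h
    · exact h
    · exact absurd ⟨K, S, hp, h, hS⟩ hub
  obtain ⟨C, hC, hCc⟩ := exists_omega_set G
  have hCS : (C ∩ S).card ≤ 1 := clique_stable_inter hC hp.2.2.2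
  have hsplitC : C = (C ∩ K) ∪ (C ∩ S) := by
    rw [← Finset.inter_union_distrib_left, hp.2.1, Finset.inter_univ]
  have h2 : C.card ≤ (C ∩ K).card + (C ∩ S).card := by
    calc C.card = (C ∩ K ∪ C ∩ S).card := by rw [← hsplitC]
      _ ≤ (C ∩ K).card + (C ∩ S).card := Finset.card_union_le _ _
  have h3 : (C ∩ K).card ≤ K.card := Finset.card_le_card Finset.inter_subset_right
  have hCK : (C ∩ K).card = K.card := by omega
  have hKC : K ⊆ C := by
    have : C ∩ K = K := Finset.eq_of_subset_of_card_le Finset.inter_subset_right (le_of_eq hCK.symm)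
    exact Finset.inter_eq_right.mp this
  have hCSne : (C ∩ S).Nonempty := by rw [← Finset.card_pos]; omega
  obtain ⟨s, hs⟩ := hCSne
  rw [Finset.mem_inter] at hs
  refine ⟨s, hs.2, fun k hk => ?_⟩
  have hsk : s ≠ k := fun e => (Finset.disjoint_left.mp hp.1) (e ▸ hk) hs.2
  exact hC hs.1 (hKC hk) hsk

/-- The neighbourhood of a swing vertex is exactly `K`. -/
lemma swing_nbhd {K S : Finset V} (hp : IsKSPartition G K S) {s : V} (hs : s ∈ S)
    (hsw : ∀ k ∈ K, G.Adj s k) : ∀ v, G.Adj s v ↔ v ∈ K := by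
  intro v
  constructor
  · intro hv
    rcases Finset.mem_union.mp (hp.2.1 ▸ Finset.mem_univ v) with h | h
    · exact h
    · exact absurd hv (hp.2.2.2 hs h (fun e => G.irrefl (e ▸ hv)))
  · exact hsw v

end Structure

/- ### The forward (deletion) construction -/

section Fwd
variable {G G' : SimpleGraph V}

lemma mem_K_iff {K S : Finset V} (hp : IsKSPartition G K S) (v : V) :
    v ∈ K ↔ v ∉ S := by
  constructor
  · exact fun hv hvS => (Finset.disjoint_left.mp hp.1) hv hvS
  · intro hv
    rcases Finset.mem_union.mp (hp.2.1 ▸ Finset.mem_univ v) with h | h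
    · exact h
    · exact absurd h hv

lemma image_eq_of_forall {W : Type*} [DecidableEq W] (e : V ≃ W) {A : Finset V} {B : Finset W}
    (h : ∀ v, v ∈ A ↔ e v ∈ B) : A.image e = B := by
  ext w
  rw [Finset.mem_image]
  constructor
  · rintro ⟨v, hv, rfl⟩; exact (h v).mp hv
  · intro hw
    exact ⟨e.symm w, (h _).mpr (by rwa [Equiv.apply_symm_apply]), Equiv.apply_symm_apply e w⟩

/-- Any two S-max partitions of a graph are related by an automorphism. -/
lemma smax_swap {K S K' S' : Finset V} (hp : IsKSPartition G K S) (hS : S.card = alphaNum G)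
    (hp' : IsKSPartition G K' S') (hS' : S'.card = alphaNum G) :
    ∃ φ : G ≃g G, S.image ⇑φ = S' := by
  by_cases hSS : S = S'
  · exact ⟨⟨Equiv.refl V, Iff.rfl⟩, by subst hSS; ext w; simp only [Finset.mem_image]; exact ⟨fun ⟨a, ha, he⟩ => by subst he; exact ha, fun hw => ⟨w, hw, rfl⟩⟩⟩
  · have hxex : ∃ x, x ∈ S ∧ x ∉ S' := by
      by_contra hc
      push_neg at hc
      exact hSS (Finset.eq_of_subset_of_card_le hc (by omega))
    have hyex : ∃ y, y ∈ S' ∧ y ∉ S := by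
      by_contra hc
      push_neg at hc
      exact hSS (Finset.eq_of_subset_of_card_le hc (by omega)).symm
    obtain ⟨x, hxS, hxS'⟩ := hxex
    obtain ⟨y, hyS', hyS⟩ := hyex
    have hxK' : x ∈ K' := (mem_K_iff hp' x).mpr hxS'
    have hyK : y ∈ K := (mem_K_iff hp y).mpr hyS
    have hK'S : (K' ∩ S).card ≤ 1 := clique_stable_inter hp'.2.2.1 hp.2.2.2
    have hKS' : (K ∩ S').card ≤ 1 := clique_stable_inter hp.2.2.1 hp'.2.2.2
    have hz : ∀ z ∈ S, z ≠ x → z ∈ S' := by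
      intro z hzS hzx
      by_contra hzS'
      have hzK' : z ∈ K' := (mem_K_iff hp' z).mpr hzS'
      exact hzx (Finset.card_le_one.mp hK'S z (Finset.mem_inter.mpr ⟨hzK', hzS⟩)
        x (Finset.mem_inter.mpr ⟨hxK', hxS⟩))
    have hz' : ∀ z ∈ S', z ≠ y → z ∈ S := by
      intro z hzS' hzy
      by_contra hzS
      have hzK : z ∈ K := (mem_K_iff hp z).mpr hzS
      exact hzy (Finset.card_le_one.mp hKS' z (Finset.mem_inter.mpr ⟨hzK, hzS'⟩)
        y (Finset.mem_inter.mpr ⟨hyK, hyS'⟩))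
    have hxy : x ≠ y := fun e => hyS (e ▸ hxS)
    have hynadj : ∀ z ∈ S, z ≠ x → ¬ G.Adj y z := by
      intro z hzS hzx
      have hzS' : z ∈ S' := hz z hzS hzx
      have hzy : z ≠ y := fun e => hyS (e ▸ hzS)
      exact fun h => hp'.2.2.2 hyS' hzS' (Ne.symm hzy) h
    have hadjxy : G.Adj x y := by
      by_contra hnadj
      have hstable : IsStableSet G ((insert y S : Finset V) : Set V) := by
        apply stable_insert hp.2.2.2
        intro z hzS
        by_cases hzx : z = x
        · subst hzx; exact fun h => hnadj (G.adj_symm h)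
        · exact hynadj z hzS hzx
      have := stable_card_le_alpha hstable
      rw [Finset.card_insert_of_notMem hyS, hS] at this
      omega
    have hsw : ∀ z, z ≠ x → z ≠ y → (G.Adj x z ↔ G.Adj y z) := by
      intro z hzx hzy
      rcases Finset.mem_union.mp (hp.2.1 ▸ Finset.mem_univ z) with hzK | hzS
      · -- z ∈ K: both adjacencies hold
        have hzS' : z ∉ S' := by
          intro hzS'
          exact (fun e => hzy e) (Finset.card_le_one.mp hKS' z
            (Finset.mem_inter.mpr ⟨hzK, hzS'⟩) y (Finset.mem_inter.mpr ⟨hyK, hyS'⟩)) |>.elim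
        have hzK' : z ∈ K' := (mem_K_iff hp' z).mpr hzS'
        have hxz : x ≠ z := fun e => (Finset.disjoint_left.mp hp.1) hzK (e ▸ hxS)
        constructor
        · intro _; exact G.adj_symm (hp.2.2.1 hzK hyK hzy)
        · intro _; exact hp'.2.2.1 hxK' hzK' hxz
      · -- z ∈ S: both adjacencies fail
        have h1 : ¬ G.Adj x z := hp.2.2.2 hxS hzS (Ne.symm hzx)
        have h2 : ¬ G.Adj y z := hynadj z hzS hzx
        exact iff_of_false h1 h2
    refine ⟨swapIso G x y hsw, ?_⟩
    have hco : ∀ v : V, ⇑(swapIso G x y hsw) v = Equiv.swap x y v := fun v => rfl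
    ext w
    rw [Finset.mem_image]
    constructor
    · rintro ⟨z, hzS, rfl⟩
      rw [hco]
      by_cases hzx : z = x
      · subst hzx; rw [Equiv.swap_apply_left]; exact hyS'
      · have hzy : z ≠ y := fun e => hyS (e ▸ hzS)
        rw [Equiv.swap_apply_of_ne_of_ne hzx hzy]
        exact hz z hzS hzx
    · intro hw
      by_cases hwy : w = y
      · subst hwy
        exact ⟨x, hxS, by rw [hco, Equiv.swap_apply_left]⟩
      · have hwS : w ∈ S := hz' w hw hwy
        have hwx : w ≠ x := fun e => hxS' (e ▸ hw)
        exact ⟨w, hwS, by rw [hco, Equiv.swap_apply_of_ne_of_ne hwx hwy]⟩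

/-- The set of vertices deleted by the forward construction. -/
noncomputable def delSet (G : SimpleGraph V) (K S : Finset V) (s : V) : Finset V :=
  insert s (K.filter (fun k => ∀ z ∈ S, G.Adj k z → z = s))

/-- Induced subgraphs on complements of corresponding sets are isomorphic. -/
noncomputable def induceIso {W : Type*} [Fintype W] [DecidableEq W] {G' : SimpleGraph W}
    (ψ : G ≃g G') (D : Finset V) :
    G.induce (↑(Dᶜ) : Set V) ≃g G'.induce (↑((D.image ⇑ψ)ᶜ) : Set W) := by
  refine ⟨Equiv.subtypeEquiv ψ.toEquiv ?_, ?_⟩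
  · intro v
    simp only [Finset.coe_compl, Set.mem_compl_iff, Finset.mem_coe, Finset.mem_image]
    constructor
    · rintro hv ⟨u, hu, he⟩
      exact hv (by rwa [← (ψ.injective (by exact he) : u = v)] )
    · intro hv hvD
      exact hv ⟨v, hvD, rfl⟩
  · rintro ⟨a, ha⟩ ⟨b, hb⟩
    simp only [Equiv.subtypeEquiv_apply, comap_adj, Function.Embedding.coe_subtype]
    exact ψ.map_adj_iff

lemma delSet_image {W : Type*} [Fintype W] [DecidableEq W] {G' : SimpleGraph W}
    (ψ : G ≃g G') (K S : Finset V) (s : V) :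
    delSet G' (K.image ⇑ψ) (S.image ⇑ψ) (ψ s)
      = (delSet G K S s).image ⇑ψ := by
  symm
  apply image_eq_of_forall ψ.toEquiv
  intro v
  simp only [delSet, Finset.mem_insert, Finset.mem_filter, Finset.mem_image]
  constructor
  · rintro (rfl | ⟨hvK, hcond⟩)
    · exact Or.inl rfl
    · refine Or.inr ⟨⟨v, hvK, rfl⟩, ?_⟩
      rintro z ⟨u, huS, rfl⟩ hadj
      have hadj' : G.Adj v u := ψ.map_adj_iff.mp hadj
      rw [hcond u huS hadj']
  · rintro (he | ⟨⟨u, huK, he⟩, hcond⟩)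
    · exact Or.inl (ψ.injective he)
    · have huv : u = v := ψ.injective he
      refine Or.inr ⟨huv ▸ huK, ?_⟩
      intro z hzS hadj
      have hadj2 : G'.Adj (ψ.toEquiv v) (ψ z) := ψ.map_adj_iff.mpr hadj
      exact ψ.injective (hcond (ψ z) ⟨z, hzS, rfl⟩ hadj2)

/-- swing transport along an isomorphism -/
lemma swing_image {W : Type*} [Fintype W] [DecidableEq W] {G' : SimpleGraph W}
    (ψ : G ≃g G') {K : Finset V} {s : V} (hsw : ∀ k ∈ K, G.Adj s k) :
    ∀ k ∈ K.image ⇑ψ, G'.Adj (ψ s) k := by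
  rintro k hk
  rw [Finset.mem_image] at hk
  obtain ⟨u, hu, rfl⟩ := hk
  rw [ψ.map_adj_iff]
  exact hsw u hu

end Fwd

/- ### Forward independence -/

section FwdIndep
variable {G : SimpleGraph V}

lemma K_eq_of_S {K K' S : Finset V} (hp : IsKSPartition G K S)
    (hp' : IsKSPartition G K' S) : K = K' := by
  ext v
  rw [mem_K_iff hp, mem_K_iff hp']

lemma fwd_indep {G G' : SimpleGraph V} (ψ : G ≃g G')
    {K S : Finset V} {s : V} (hp : IsKSPartition G K S) (hS : S.card = alphaNum G)
    (hs : s ∈ S) (hsw : ∀ k ∈ K, G.Adj s k)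
    {K' S' : Finset V} {s' : V} (hp' : IsKSPartition G' K' S') (hS' : S'.card = alphaNum G')
    (hs' : s' ∈ S') (hsw' : ∀ k ∈ K', G'.Adj s' k) :
    Nonempty ((G.induce (↑((delSet G K S s)ᶜ) : Set V)) ≃g
      (G'.induce (↑((delSet G' K' S' s')ᶜ) : Set V))) := by
  -- Step 1: transport the data of G along ψ
  set K₁ := K.image ⇑ψ with hK₁
  set S₁ := S.image ⇑ψ with hS₁def
  set s₁ := ψ s with hs₁def
  have hp₁ : IsKSPartition G' K₁ S₁ := ψ.image_partition hp
  have hS₁ : S₁.card = alphaNum G' := by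
    rw [hS₁def, Finset.card_image_of_injective _ ψ.injective, hS, ψ.alpha_eq]
  have hs₁ : s₁ ∈ S₁ := Finset.mem_image_of_mem _ hs
  have hsw₁ : ∀ k ∈ K₁, G'.Adj s₁ k := swing_image ψ hsw
  have iso1 : (G.induce (↑((delSet G K S s)ᶜ) : Set V)) ≃g
      (G'.induce (↑((delSet G' K₁ S₁ s₁)ᶜ) : Set V)) := by
    rw [delSet_image ψ K S s]
    exact induceIso ψ _
  -- Step 2: move to the partition (K', S') by an automorphism
  obtain ⟨φ, hφS⟩ := smax_swap hp₁ hS₁ hp' hS'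
  have hφK : K₁.image ⇑φ = K' := by
    have h2 : IsKSPartition G' (K₁.image ⇑φ) S' := hφS ▸ φ.image_partition hp₁
    exact K_eq_of_S h2 hp'
  set s₂ := φ s₁ with hs₂def
  have hs₂ : s₂ ∈ S' := hφS ▸ Finset.mem_image_of_mem _ hs₁
  have hsw₂ : ∀ k ∈ K', G'.Adj s₂ k := hφK ▸ swing_image φ hsw₁
  have iso2 : (G'.induce (↑((delSet G' K₁ S₁ s₁)ᶜ) : Set V)) ≃g
      (G'.induce (↑((delSet G' K' S' s₂)ᶜ) : Set V)) := by
    have he : delSet G' K' S' s₂ = (delSet G' K₁ S₁ s₁).image ⇑φ := by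
      rw [← hφK, ← hφS]; exact delSet_image φ K₁ S₁ s₁
    rw [he]
    exact induceIso φ _
  -- Step 3: same partition, two swing vertices
  by_cases hss : s₂ = s'
  · subst hss
    exact ⟨iso1.trans iso2⟩
  · have hdel₂ : delSet G' K' S' s₂ = {s₂} := by
      have hf : K'.filter (fun k => ∀ z ∈ S', G'.Adj k z → z = s₂) = ∅ :=
        Finset.filter_false_of_mem (fun k hk hall =>
          hss (hall s' hs' (G'.adj_symm (hsw' k hk))).symm)
      rw [delSet, hf]
      simp
    have hdel' : delSet G' K' S' s' = {s'} := by
      have hf : K'.filter (fun k => ∀ z ∈ S', G'.Adj k z → z = s') = ∅ :=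
        Finset.filter_false_of_mem (fun k hk hall =>
          hss (hall s₂ hs₂ (G'.adj_symm (hsw₂ k hk))))
      rw [delSet, hf]
      simp
    have htw : ∀ z, z ≠ s₂ → z ≠ s' → (G'.Adj s₂ z ↔ G'.Adj s' z) := by
      intro z _ _
      rw [swing_nbhd hp' hs₂ hsw₂ z, swing_nbhd hp' hs' hsw' z]
    set τ := swapIso G' s₂ s' htw with hτdef
    have iso3 : (G'.induce (↑((delSet G' K' S' s₂)ᶜ) : Set V)) ≃g
        (G'.induce (↑((delSet G' K' S' s')ᶜ) : Set V)) := by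
      have himg : ({s₂} : Finset V).image ⇑τ = {s'} := by
        rw [Finset.image_singleton]
        have : τ s₂ = Equiv.swap s₂ s' s₂ := rfl
        rw [this, Equiv.swap_apply_left]
      rw [hdel₂, hdel', ← himg]
      exact induceIso τ _
    exact ⟨(iso1.trans iso2).trans iso3⟩

end FwdIndep

/- ### The backward (addition) construction -/

section Bwd
variable {U : Type*} [Fintype U] [DecidableEq U]

/-- Add to `H` a clique of `m` new vertices, each adjacent to exactly `A` inside `H`. -/
def addOn (H : SimpleGraph U) (A : Finset U) (m : ℕ) : SimpleGraph (U ⊕ Fin m) where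
  Adj u v := match u, v with
    | Sum.inl a, Sum.inl b => H.Adj a b
    | Sum.inl a, Sum.inr _ => a ∈ A
    | Sum.inr _, Sum.inl b => b ∈ A
    | Sum.inr i, Sum.inr j => i ≠ j
  symm := ⟨by rintro (a | i) (b | j) h <;> simp_all <;> first | exact H.adj_symm h | exact fun e => h e.symm⟩
  loopless := ⟨by rintro (a | i) h <;> simp_all⟩

variable {H : SimpleGraph U} {A B : Finset U} {m : ℕ}

@[simp] lemma addOn_adj_ll {a b : U} : (addOn H A m).Adj (Sum.inl a) (Sum.inl b) ↔ H.Adj a b :=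
  Iff.rfl
@[simp] lemma addOn_adj_lr {a : U} {i : Fin m} :
    (addOn H A m).Adj (Sum.inl a) (Sum.inr i) ↔ a ∈ A := Iff.rfl
@[simp] lemma addOn_adj_rl {a : U} {i : Fin m} :
    (addOn H A m).Adj (Sum.inr i) (Sum.inl a) ↔ a ∈ A := Iff.rfl
@[simp] lemma addOn_adj_rr {i j : Fin m} :
    (addOn H A m).Adj (Sum.inr i) (Sum.inr j) ↔ i ≠ j := Iff.rfl

/-- The clique part of the canonical partition of `addOn`. -/
def KstF (A : Finset U) (m : ℕ) (r : Fin m) : Finset (U ⊕ Fin m) :=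
  A.image Sum.inl ∪ (Finset.univ.erase r).image Sum.inr

/-- The stable part of the canonical partition of `addOn`. -/
def SstF (B : Finset U) (m : ℕ) (r : Fin m) : Finset (U ⊕ Fin m) :=
  B.image Sum.inl ∪ {Sum.inr r}

lemma mem_KstF {r : Fin m} {v : U ⊕ Fin m} :
    v ∈ KstF A m r ↔ (∃ a ∈ A, v = Sum.inl a) ∨ (∃ i : Fin m, i ≠ r ∧ v = Sum.inr i) := by
  unfold KstF
  simp only [Finset.mem_union, Finset.mem_image, Finset.mem_erase, Finset.mem_univ, and_true]
  constructor
  · rintro (⟨a, ha, rfl⟩ | ⟨i, hi, rfl⟩)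
    · exact Or.inl ⟨a, ha, rfl⟩
    · exact Or.inr ⟨i, hi, rfl⟩
  · rintro (⟨a, ha, rfl⟩ | ⟨i, hi, rfl⟩)
    · exact Or.inl ⟨a, ha, rfl⟩
    · exact Or.inr ⟨i, hi, rfl⟩

lemma mem_SstF {r : Fin m} {v : U ⊕ Fin m} :
    v ∈ SstF B m r ↔ (∃ b ∈ B, v = Sum.inl b) ∨ v = Sum.inr r := by
  unfold SstF
  simp only [Finset.mem_union, Finset.mem_image, Finset.mem_singleton]
  constructor
  · rintro (⟨b, hb, rfl⟩ | rfl)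
    · exact Or.inl ⟨b, hb, rfl⟩
    · exact Or.inr rfl
  · rintro (⟨b, hb, rfl⟩ | rfl)
    · exact Or.inl ⟨b, hb, rfl⟩
    · exact Or.inr rfl

lemma addOn_partition (hp : IsKSPartition H A B) (r : Fin m) :
    IsKSPartition (addOn H A m) (KstF A m r) (SstF B m r) := by
  refine ⟨?_, ?_, ?_, ?_⟩
  · rw [Finset.disjoint_left]
    intro v hv hv'
    rw [mem_KstF] at hv
    rw [mem_SstF] at hv'
    rcases hv with ⟨a, ha, rfl⟩ | ⟨i, hi, rfl⟩
    · rcases hv' with ⟨b, hb, he⟩ | he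
      · rw [Sum.inl.injEq] at he
        exact (Finset.disjoint_left.mp hp.1) ha (he ▸ hb)
      · exact Sum.inl_ne_inr he
    · rcases hv' with ⟨b, hb, he⟩ | he
      · exact Sum.inr_ne_inl he
      · exact hi (by injection he)
  · apply Finset.eq_univ_of_forall
    rintro (a | i)
    · by_cases ha : a ∈ A
      · exact Finset.mem_union_left _ (mem_KstF.mpr (Or.inl ⟨a, ha, rfl⟩))
      · have : a ∈ B := (mem_K_iff hp a).not_left.mp ha
        exact Finset.mem_union_right _ (mem_SstF.mpr (Or.inl ⟨a, this, rfl⟩))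
    · by_cases hi : i = r
      · exact Finset.mem_union_right _ (mem_SstF.mpr (Or.inr (by rw [hi])))
      · exact Finset.mem_union_left _ (mem_KstF.mpr (Or.inr ⟨i, hi, rfl⟩))
  · intro x hx y hy hxy
    rw [Finset.mem_coe, mem_KstF] at hx hy
    rcases hx with ⟨a, ha, rfl⟩ | ⟨i, hi, rfl⟩ <;> rcases hy with ⟨b, hb, rfl⟩ | ⟨j, hj, rfl⟩
    · exact hp.2.2.1 ha hb (by simpa using hxy)
    · exact ha
    · exact hb
    · simpa using (by simpa using hxy : i ≠ j)
  · intro x hx y hy hxy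
    rw [Finset.mem_coe, mem_SstF] at hx hy
    rcases hx with ⟨a, ha, rfl⟩ | rfl <;> rcases hy with ⟨b, hb, rfl⟩ | rfl
    · exact hp.2.2.2 ha hb (by simpa using hxy)
    · exact fun hA => (Finset.disjoint_left.mp hp.1) hA ha
    · exact fun hA => (Finset.disjoint_left.mp hp.1) hA hb
    · exact absurd rfl hxy

lemma KstF_card (r : Fin m) : (KstF A m r).card = A.card + (m - 1) := by
  unfold KstF
  rw [Finset.card_union_of_disjoint]
  · rw [Finset.card_image_of_injective _ Sum.inl_injective,
      Finset.card_image_of_injective _ Sum.inr_injective,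
      Finset.card_erase_of_mem (Finset.mem_univ r)]
    simp
  · rw [Finset.disjoint_left]
    rintro v hv hv'
    rw [Finset.mem_image] at hv hv'
    obtain ⟨a, -, rfl⟩ := hv
    obtain ⟨i, -, h⟩ := hv'
    exact Sum.inr_ne_inl h

lemma SstF_card (r : Fin m) : (SstF B m r).card = B.card + 1 := by
  unfold SstF
  rw [Finset.card_union_of_disjoint]
  · rw [Finset.card_image_of_injective _ Sum.inl_injective, Finset.card_singleton]
  · rw [Finset.disjoint_left]
    rintro v hv hv'
    rw [Finset.mem_image] at hv
    rw [Finset.mem_singleton] at hv'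
    obtain ⟨a, -, rfl⟩ := hv
    exact Sum.inl_ne_inr hv'

/-- The big clique `A ∪ (new vertices)` in `addOn`. -/
lemma addOn_bigclique (hp : IsKSPartition H A B) :
    (addOn H A m).IsClique ((A.image Sum.inl ∪ Finset.univ.image Sum.inr : Finset (U ⊕ Fin m)) :
      Set (U ⊕ Fin m)) := by
  intro x hx y hy hxy
  rw [Finset.mem_coe, Finset.mem_union] at hx hy
  rcases hx with hx | hx <;> rcases hy with hy | hy <;>
    simp only [Finset.mem_image] at hx hy
  · obtain ⟨a, ha, rfl⟩ := hx; obtain ⟨b, hb, rfl⟩ := hy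
    exact hp.2.2.1 ha hb (by simpa using hxy)
  · obtain ⟨a, ha, rfl⟩ := hx; obtain ⟨i, -, rfl⟩ := hy
    exact ha
  · obtain ⟨i, -, rfl⟩ := hx; obtain ⟨b, hb, rfl⟩ := hy
    exact hb
  · obtain ⟨i, -, rfl⟩ := hx; obtain ⟨j, -, rfl⟩ := hy
    simpa using (by simpa using hxy : ¬ (i = j))

lemma addOn_unbalanced (hp : IsKSPartition H A B) (hm : 0 < m) :
    ¬ IsBalanced (addOn H A m) := by
  set r : Fin m := ⟨0, hm⟩
  apply unbalanced_of_big (A.image Sum.inl ∪ Finset.univ.image Sum.inr) (SstF B m r)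
    (addOn_bigclique hp) (addOn_partition hp r).2.2.2
  have hc1 : (A.image Sum.inl ∪ Finset.univ.image Sum.inr : Finset (U ⊕ Fin m)).card
      = A.card + m := by
    rw [Finset.card_union_of_disjoint]
    · rw [Finset.card_image_of_injective _ Sum.inl_injective,
        Finset.card_image_of_injective _ Sum.inr_injective]
      simp
    · rw [Finset.disjoint_left]
      rintro v hv hv'
      rw [Finset.mem_image] at hv hv'
      obtain ⟨a, -, rfl⟩ := hv
      obtain ⟨i, -, h⟩ := hv'
      exact Sum.inr_ne_inl h
  rw [hc1, SstF_card]
  have := hp.card_add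
  simp only [Fintype.card_sum, Fintype.card_fin]
  omega

lemma addOn_smax (hp : IsKSPartition H A B) (r : Fin m) :
    (SstF B m r).card = alphaNum (addOn H A m) := by
  have hle : B.card + 1 ≤ alphaNum (addOn H A m) := by
    have := stable_card_le_alpha (addOn_partition hp r).2.2.2
    rwa [SstF_card] at this
  have hge : alphaNum (addOn H A m) ≤ B.card + 1 := by
    obtain ⟨T, hT, hTc⟩ := exists_alpha_set (addOn H A m)
    rw [← hTc]
    -- T meets the big clique in at most one vertex
    set C : Finset (U ⊕ Fin m) := A.image Sum.inl ∪ Finset.univ.image Sum.inr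
    have hCT : (C ∩ T).card ≤ 1 := clique_stable_inter (addOn_bigclique hp) hT
    have hcover : T ⊆ (C ∩ T) ∪ (B.image Sum.inl) := by
      rintro (a | i) hv
      · by_cases ha : a ∈ A
        · exact Finset.mem_union_left _ (Finset.mem_inter.mpr
            ⟨Finset.mem_union_left _ (Finset.mem_image_of_mem _ ha), hv⟩)
        · have : a ∈ B := (mem_K_iff hp a).not_left.mp ha
          exact Finset.mem_union_right _ (Finset.mem_image_of_mem _ this)
      · exact Finset.mem_union_left _ (Finset.mem_inter.mpr
          ⟨Finset.mem_union_right _ (Finset.mem_image_of_mem _ (Finset.mem_univ i)), hv⟩)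
    calc T.card ≤ ((C ∩ T) ∪ (B.image Sum.inl)).card := Finset.card_le_card hcover
      _ ≤ (C ∩ T).card + (B.image Sum.inl).card := Finset.card_union_le _ _
      _ ≤ 1 + B.card := by
          rw [Finset.card_image_of_injective _ Sum.inl_injective]; omega
      _ = B.card + 1 := by omega
  rw [SstF_card]
  omega

lemma addOn_swing (hp : IsKSPartition H A B) (r : Fin m) :
    ∀ k ∈ KstF A m r, (addOn H A m).Adj (Sum.inr r) k := by
  intro k hk
  rw [mem_KstF] at hk
  rcases hk with ⟨a, ha, rfl⟩ | ⟨i, hi, rfl⟩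
  · exact ha
  · simpa using (Ne.symm hi)

lemma addOn_delSet (hp : IsKSPartition H A B) (hS : B.card = alphaNum H) (r : Fin m) :
    delSet (addOn H A m) (KstF A m r) (SstF B m r) (Sum.inr r)
      = Finset.univ.image Sum.inr := by
  unfold delSet
  ext v
  rw [Finset.mem_insert, Finset.mem_filter]
  constructor
  · rintro (rfl | ⟨hvK, hcond⟩)
    · exact Finset.mem_image_of_mem _ (Finset.mem_univ r)
    · rw [mem_KstF] at hvK
      rcases hvK with ⟨a, ha, rfl⟩ | ⟨i, hi, rfl⟩
      · -- a ∈ A has a neighbour in B, contradiction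
        obtain ⟨b, hb, hab⟩ := k_has_neighbor hp hS ha
        have hbB : Sum.inl b ∈ SstF B m r := mem_SstF.mpr (Or.inl ⟨b, hb, rfl⟩)
        have := hcond (Sum.inl b) hbB (by simpa using hab)
        exact absurd this (Sum.inl_ne_inr)
      · exact Finset.mem_image_of_mem _ (Finset.mem_univ i)
  · rintro hv
    rw [Finset.mem_image] at hv
    obtain ⟨i, -, rfl⟩ := hv
    by_cases hi : i = r
    · exact Or.inl (by rw [hi])
    · refine Or.inr ⟨mem_KstF.mpr (Or.inr ⟨i, hi, rfl⟩), ?_⟩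
      intro z hz hadj
      rw [mem_SstF] at hz
      rcases hz with ⟨b, hb, rfl⟩ | rfl
      · -- impossible: inr i adjacent to inl b means b ∈ A
        have hbA : b ∈ A := by simpa using hadj
        exact absurd hb ((mem_K_iff hp b).mp hbA)
      · rfl

/-- The graph obtained from `addOn` by deleting all new vertices is `H`. -/
noncomputable def addOn_del_iso (H : SimpleGraph U) (A : Finset U) (m : ℕ) :
    H ≃g (addOn H A m).induce
      (↑((Finset.univ.image (Sum.inr : Fin m → U ⊕ Fin m))ᶜ) : Set (U ⊕ Fin m)) := by
  have hmem : ∀ a : U, (Sum.inl a : U ⊕ Fin m) ∈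
      (↑((Finset.univ.image (Sum.inr : Fin m → U ⊕ Fin m))ᶜ) : Set (U ⊕ Fin m)) := by
    intro a
    simp only [Finset.coe_compl, Set.mem_compl_iff, Finset.mem_coe, Finset.mem_image]
    rintro ⟨i, -, h⟩
    exact Sum.inr_ne_inl h
  refine ⟨Equiv.ofBijective (fun a => ⟨Sum.inl a, hmem a⟩) ⟨?_, ?_⟩, ?_⟩
  · intro a b h
    have : (Sum.inl a : U ⊕ Fin m) = Sum.inl b := congrArg Subtype.val h
    exact Sum.inl_injective this
  · rintro ⟨v, hv⟩
    rcases v with a | i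
    · exact ⟨a, rfl⟩
    · exfalso
      simp only [Finset.coe_compl, Set.mem_compl_iff, Finset.mem_coe, Finset.mem_image] at hv
      exact hv ⟨i, Finset.mem_univ i, rfl⟩
  · intro a b
    rfl

/-- Relabelling the base graph gives isomorphic `addOn` graphs. -/
noncomputable def addOn_map_iso {U' : Type*} [Fintype U'] [DecidableEq U'] {H' : SimpleGraph U'}
    (ψ : H ≃g H') (A : Finset U) (m : ℕ) :
    addOn H A m ≃g addOn H' (A.image ⇑ψ) m := by
  refine ⟨Equiv.sumCongr ψ.toEquiv (Equiv.refl _), ?_⟩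
  rintro (a | i) (b | j) <;>
    simp only [Equiv.sumCongr_apply, Sum.map_inl, Sum.map_inr, Equiv.refl_apply,
      addOn_adj_ll, addOn_adj_lr, addOn_adj_rl, addOn_adj_rr]
  · exact ψ.map_adj_iff
  · constructor
    · intro h
      obtain ⟨u, hu, he⟩ := Finset.mem_image.mp h
      have : u = a := ψ.injective (by exact he)
      exact this ▸ hu
    · exact fun h => Finset.mem_image_of_mem _ h
  · constructor
    · intro h
      obtain ⟨u, hu, he⟩ := Finset.mem_image.mp h
      have : u = b := ψ.injective (by exact he)
      exact this ▸ hu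
    · exact fun h => Finset.mem_image_of_mem _ h

/-- Choice-independence of the backward construction. -/
lemma bwd_indep {U' : Type*} [Fintype U'] [DecidableEq U'] {H' : SimpleGraph U'}
    (ψ : H ≃g H') (hp : IsKSPartition H A B) (hS : B.card = alphaNum H)
    {A' B' : Finset U'} (hp' : IsKSPartition H' A' B') (hS' : B'.card = alphaNum H')
    (m : ℕ) : Nonempty (addOn H A m ≃g addOn H' A' m) := by
  have iso1 := addOn_map_iso ψ A m
  have hp₁ : IsKSPartition H' (A.image ⇑ψ) (B.image ⇑ψ) := ψ.image_partition hp
  have hS₁ : (B.image ⇑ψ).card = alphaNum H' := by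
    rw [Finset.card_image_of_injective _ ψ.injective, hS, ψ.alpha_eq]
  obtain ⟨φ, hφS⟩ := smax_swap hp₁ hS₁ hp' hS'
  have hφK : (A.image ⇑ψ).image ⇑φ = A' := by
    have h2 : IsKSPartition H' ((A.image ⇑ψ).image ⇑φ) B' := hφS ▸ φ.image_partition hp₁
    exact K_eq_of_S h2 hp'
  have iso2 := addOn_map_iso φ (A.image ⇑ψ) m
  rw [hφK] at iso2
  exact ⟨iso1.trans iso2⟩

end Bwd

/- ### The induced graph on the complement of the deleted set -/

section Induced
variable {G : SimpleGraph V} {K S : Finset V} {s : V}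

lemma mem_delSet {v : V} :
    v ∈ delSet G K S s ↔ v = s ∨ (v ∈ K ∧ ∀ z ∈ S, G.Adj v z → z = s) := by
  unfold delSet
  rw [Finset.mem_insert, Finset.mem_filter]

/-- The clique side of the canonical partition of the induced graph. -/
noncomputable def indK (G : SimpleGraph V) (K S : Finset V) (s : V) :
    Finset (↑((delSet G K S s)ᶜ : Finset V) : Set V) :=
  Finset.univ.filter (fun w => (w : V) ∈ K)

/-- The stable side of the canonical partition of the induced graph. -/
noncomputable def indS (G : SimpleGraph V) (K S : Finset V) (s : V) :
    Finset (↑((delSet G K S s)ᶜ : Finset V) : Set V) :=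
  Finset.univ.filter (fun w => (w : V) ∈ S)

variable (hp : IsKSPartition G K S) (hS : S.card = alphaNum G)
  (hs : s ∈ S) (hsw : ∀ k ∈ K, G.Adj s k)

lemma coe_not_mem_del (w : (↑((delSet G K S s)ᶜ : Finset V) : Set V)) :
    (w : V) ∉ delSet G K S s := by
  simpa using w.2

include hp hs in
lemma indS_card : (indS G K S s).card = S.card - 1 := by
  have hsD : s ∈ delSet G K S s := mem_delSet.mpr (Or.inl rfl)
  have : (indS G K S s).card = (S.erase s).card := by
    refine Finset.card_bij (fun w _ => (w : V)) ?_ ?_ ?_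
    · intro w hw
      rw [indS, Finset.mem_filter] at hw
      refine Finset.mem_erase.mpr ⟨?_, hw.2⟩
      intro he
      have he' : (w : V) = s := he
      exact coe_not_mem_del w (by rw [he']; exact hsD)
    · intro w₁ h₁ w₂ h₂ he
      exact Subtype.ext he
    · intro v hv
      rw [Finset.mem_erase] at hv
      have hvD : v ∉ delSet G K S s := by
        rw [mem_delSet]
        rintro (rfl | ⟨hvK, -⟩)
        · exact hv.1 rfl
        · exact (Finset.disjoint_left.mp hp.1) hvK hv.2
      refine ⟨⟨v, ?_⟩, ?_, rfl⟩
      · rw [Finset.coe_compl, Set.mem_compl_iff, Finset.mem_coe]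
        exact hvD
      · rw [indS, Finset.mem_filter]
        exact ⟨Finset.mem_univ _, hv.2⟩
  rw [this, Finset.card_erase_of_mem hs]

include hp in
lemma ind_partition :
    IsKSPartition (G.induce (↑((delSet G K S s)ᶜ : Finset V) : Set V)) (indK G K S s)
      (indS G K S s) := by
  refine ⟨?_, ?_, ?_, ?_⟩
  · rw [Finset.disjoint_left]
    intro w hw hw'
    rw [indK, Finset.mem_filter] at hw
    rw [indS, Finset.mem_filter] at hw'
    exact (Finset.disjoint_left.mp hp.1) hw.2 hw'.2
  · apply Finset.eq_univ_of_forall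
    intro w
    rcases Finset.mem_union.mp (hp.2.1 ▸ Finset.mem_univ (w : V)) with h | h
    · exact Finset.mem_union_left _ (by rw [indK, Finset.mem_filter]; exact ⟨Finset.mem_univ _, h⟩)
    · exact Finset.mem_union_right _ (by rw [indS, Finset.mem_filter]; exact ⟨Finset.mem_univ _, h⟩)
  · intro x hx y hy hxy
    rw [Finset.mem_coe, indK, Finset.mem_filter] at hx hy
    exact hp.2.2.1 hx.2 hy.2 (fun he => hxy (Subtype.ext he))
  · intro x hx y hy hxy
    rw [Finset.mem_coe, indS, Finset.mem_filter] at hx hy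
    exact hp.2.2.2 hx.2 hy.2 (fun he => hxy (Subtype.ext he))

include hp hs in
lemma ind_smax :
    (indS G K S s).card = alphaNum (G.induce (↑((delSet G K S s)ᶜ : Finset V) : Set V)) := by
  set H₀ := G.induce (↑((delSet G K S s)ᶜ : Finset V) : Set V) with hH₀
  have hle : (indS G K S s).card ≤ alphaNum H₀ :=
    stable_card_le_alpha (ind_partition hp).2.2.2
  have hge : alphaNum H₀ ≤ (indS G K S s).card := by
    obtain ⟨T, hT, hTc⟩ := exists_alpha_set H₀
    rw [← hTc]
    by_contra hgt
    push_neg at hgt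
    -- T covers: T ⊆ (indK ∩ T) ∪ (indS ∩ T)
    have hcover : T = (indK G K S s ∩ T) ∪ (indS G K S s ∩ T) := by
      ext w
      rw [Finset.mem_union, Finset.mem_inter, Finset.mem_inter]
      constructor
      · intro hw
        rcases Finset.mem_union.mp ((ind_partition hp).2.1 ▸ Finset.mem_univ w) with h | h
        · exact Or.inl ⟨h, hw⟩
        · exact Or.inr ⟨h, hw⟩
      · rintro (⟨-, hw⟩ | ⟨-, hw⟩) <;> exact hw
    have hKT : (indK G K S s ∩ T).card ≤ 1 := by
      have := clique_stable_inter (G := H₀) (ind_partition hp).2.2.1 hT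
      exact this
    have hST : (indS G K S s ∩ T).card ≤ (indS G K S s).card :=
      Finset.card_le_card Finset.inter_subset_left
    have hTcard : T.card ≤ (indK G K S s ∩ T).card + (indS G K S s ∩ T).card := by
      calc T.card = ((indK G K S s ∩ T) ∪ (indS G K S s ∩ T)).card := by rw [← hcover]
        _ ≤ _ := Finset.card_union_le _ _
    -- so equality throughout; indS ⊆ T and there is a ∈ indK ∩ T
    have hSsub : indS G K S s ⊆ T := by
      have h1 : (indS G K S s).card ≤ (indS G K S s ∩ T).card := by omega
      have h2 : indS G K S s ∩ T = indS G K S s :=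
        Finset.eq_of_subset_of_card_le Finset.inter_subset_left h1
      intro w hw
      exact (Finset.mem_inter.mp (h2.symm ▸ hw)).2
    have hKex : (indK G K S s ∩ T).Nonempty := by
      rw [← Finset.card_pos]; omega
    obtain ⟨a, ha⟩ := hKex
    rw [Finset.mem_inter, indK, Finset.mem_filter] at ha
    obtain ⟨⟨-, haK⟩, haT⟩ := ha
    -- a has a neighbour z ∈ S, z ≠ s, which survives deletion
    have haD : (a : V) ∉ delSet G K S s := coe_not_mem_del a
    rw [mem_delSet] at haD
    push_neg at haD
    obtain ⟨z, hzS, hzadj, hzs⟩ := haD.2 haK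
    have hzD : z ∉ delSet G K S s := by
      rw [mem_delSet]
      rintro (rfl | ⟨hzK, -⟩)
      · exact hzs rfl
      · exact (Finset.disjoint_left.mp hp.1) hzK hzS
    set zw : (↑((delSet G K S s)ᶜ : Finset V) : Set V) :=
      ⟨z, by rw [Finset.coe_compl, Set.mem_compl_iff, Finset.mem_coe]; exact hzD⟩ with hzw
    have hzwS : zw ∈ indS G K S s := by
      rw [indS, Finset.mem_filter]; exact ⟨Finset.mem_univ _, hzS⟩
    have hzwT : zw ∈ T := hSsub hzwS
    have hne : a ≠ zw := by
      intro he
      exact (Finset.disjoint_left.mp hp.1) haK (by rw [he]; exact hzS)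
    exact hT haT hzwT hne hzadj
  omega

include hp hs hsw in
lemma adj_delSet {v d : V} (hv : v ∉ delSet G K S s) (hd : d ∈ delSet G K S s) :
    G.Adj v d ↔ v ∈ K := by
  have hdmem := hd
  rw [mem_delSet] at hd
  constructor
  · intro hadj
    by_contra hvK
    have hvS : v ∈ S := (mem_K_iff hp v).not_left.mp hvK
    rcases hd with rfl | ⟨hdK, hcond⟩
    · -- v adjacent to s with v ∈ S: impossible since N(s) = K
      exact hvK ((swing_nbhd hp hs hsw v).mp (G.adj_symm hadj))
    · have := hcond v hvS (G.adj_symm hadj)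
      subst this
      exact hv (mem_delSet.mpr (Or.inl rfl))
  · intro hvK
    rcases hd with rfl | ⟨hdK, -⟩
    · exact G.adj_symm (hsw v hvK)
    · exact hp.2.2.1 hvK hdK (fun he => hv (he ▸ hdmem))

include hp hs hsw in
lemma delSet_adj {d d' : V} (hd : d ∈ delSet G K S s) (hd' : d' ∈ delSet G K S s)
    (hne : d ≠ d') : G.Adj d d' := by
  rw [mem_delSet] at hd hd'
  rcases hd with rfl | ⟨hdK, -⟩
  · rcases hd' with rfl | ⟨hd'K, -⟩
    · exact absurd rfl hne
    · exact hsw d' hd'K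
  · rcases hd' with rfl | ⟨hd'K, -⟩
    · exact G.adj_symm (hsw d hdK)
    · exact hp.2.2.1 hdK hd'K hne

end Induced

/- ### Reconstruction isomorphism -/

section Recon
variable {G : SimpleGraph V} {K S : Finset V} {s : V}

noncomputable def reconIso (hp : IsKSPartition G K S)
    (hs : s ∈ S) (hsw : ∀ k ∈ K, G.Adj s k) :
    addOn (G.induce (↑((delSet G K S s)ᶜ : Finset V) : Set V)) (indK G K S s)
      (delSet G K S s).card ≃g G := by
  set D := delSet G K S s with hD
  set eD : Fin D.card ≃ {v // v ∈ D} := (Fintype.equivFinOfCardEq (Fintype.card_coe D)).symm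
    with heD
  set f : (↑(Dᶜ : Finset V) : Set V) ⊕ Fin D.card → V :=
    Sum.elim (fun w => (w : V)) (fun i => ((eD i) : V)) with hf
  have hmemD : ∀ i, ((eD i : {v // v ∈ D}) : V) ∈ D := fun i => (eD i).2
  have hmemC : ∀ w : (↑(Dᶜ : Finset V) : Set V), (w : V) ∉ D := fun w => by simpa using w.2
  have hinj : Function.Injective f := by
    rintro (w | i) (w' | j) he
    · exact congrArg Sum.inl (Subtype.ext he)
    · have he' : (w : V) = ((eD j : {v // v ∈ D}) : V) := he
      exact absurd (he' ▸ hmemD j) (hmemC w)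
    · have he' : (w' : V) = ((eD i : {v // v ∈ D}) : V) := he.symm
      exact absurd (he' ▸ hmemD i) (hmemC w')
    · exact congrArg Sum.inr (eD.injective (Subtype.ext he))
  have hsurj : Function.Surjective f := by
    intro v
    by_cases hv : v ∈ D
    · refine ⟨Sum.inr (eD.symm ⟨v, hv⟩), ?_⟩
      simp [hf]
    · refine ⟨Sum.inl ⟨v, by simpa using hv⟩, rfl⟩
  refine ⟨Equiv.ofBijective f ⟨hinj, hsurj⟩, ?_⟩
  have hcoe : ∀ u, (Equiv.ofBijective f ⟨hinj, hsurj⟩) u = f u := fun u => rfl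
  rintro (w | i) (w' | j) <;> rw [hcoe, hcoe]
  · exact Iff.rfl
  · -- G.Adj w (d j) ↔ w ∈ indK
    show G.Adj (w : V) ((eD j : {v // v ∈ D}) : V) ↔ _
    rw [adj_delSet hp hs hsw (hmemC w) (hmemD j)]
    show _ ↔ w ∈ indK G K S s
    rw [indK, Finset.mem_filter]
    simp
  · show G.Adj ((eD i : {v // v ∈ D}) : V) (w' : V) ↔ _
    rw [G.adj_comm, adj_delSet hp hs hsw (hmemC w') (hmemD i)]
    show _ ↔ w' ∈ indK G K S s
    rw [indK, Finset.mem_filter]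
    simp
  · show G.Adj ((eD i : {v // v ∈ D}) : V) ((eD j : {v // v ∈ D}) : V) ↔ _
    constructor
    · intro h
      intro he
      have : (i : Fin D.card) = j := he
      exact G.irrefl (this ▸ h)
    · intro hne
      refine delSet_adj hp hs hsw (hmemD i) (hmemD j) ?_
      intro he
      exact (by simpa using hne : ¬ i = j) (eD.injective (Subtype.ext he))

end Recon

/- ### Assembly -/

section Assembly

variable {n : ℕ}

lemma fwd_exists (G : SimpleGraph (Fin n)) (h1 : IsSplit G) (h2 : ¬ IsBalanced G) :
    ∃ d : Finset (Fin n) × Finset (Fin n) × Fin n, IsKSPartition G d.1 d.2.1 ∧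
      d.2.1.card = alphaNum G ∧ d.2.2 ∈ d.2.1 ∧ ∀ k ∈ d.1, G.Adj d.2.2 k := by
  obtain ⟨K, S, hp, hS⟩ := smax_exists h1
  obtain ⟨s, hs, hsw⟩ := swing_exists hp hS h2
  exact ⟨(K, S, s), hp, hS, hs, hsw⟩

noncomputable def fwdD (G : SimpleGraph (Fin n)) (h1 : IsSplit G) (h2 : ¬ IsBalanced G) :
    Finset (Fin n) × Finset (Fin n) × Fin n :=
  Classical.choose (fwd_exists G h1 h2)

lemma fwdD_spec (G : SimpleGraph (Fin n)) (h1 : IsSplit G) (h2 : ¬ IsBalanced G) :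
    IsKSPartition G (fwdD G h1 h2).1 (fwdD G h1 h2).2.1 ∧
      (fwdD G h1 h2).2.1.card = alphaNum G ∧ (fwdD G h1 h2).2.2 ∈ (fwdD G h1 h2).2.1 ∧
      ∀ k ∈ (fwdD G h1 h2).1, G.Adj (fwdD G h1 h2).2.2 k :=
  Classical.choose_spec (fwd_exists G h1 h2)

noncomputable def fwdDel (G : SimpleGraph (Fin n)) (h1 : IsSplit G) (h2 : ¬ IsBalanced G) :
    Finset (Fin n) :=
  delSet G (fwdD G h1 h2).1 (fwdD G h1 h2).2.1 (fwdD G h1 h2).2.2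

lemma fwdDel_card_pos (G : SimpleGraph (Fin n)) (h1 : IsSplit G) (h2 : ¬ IsBalanced G) :
    0 < (fwdDel G h1 h2).card := by
  refine Finset.card_pos.mpr ⟨(fwdD G h1 h2).2.2, ?_⟩
  exact Finset.mem_insert_self _ _

lemma fwdDel_card_le (G : SimpleGraph (Fin n)) (h1 : IsSplit G) (h2 : ¬ IsBalanced G) :
    (fwdDel G h1 h2).card ≤ n := by
  have := Finset.card_le_univ (fwdDel G h1 h2)
  simpa using this

lemma n_pos_of_unbalanced (G : SimpleGraph (Fin n)) (h1 : IsSplit G) (h2 : ¬ IsBalanced G) :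
    0 < n := (fwdD G h1 h2).2.2.pos

lemma card_compl_coe (D : Finset (Fin n)) :
    Fintype.card (↑(Dᶜ : Finset (Fin n)) : Set (Fin n)) = n - D.card := by
  rw [← Set.toFinset_card]
  simp [Finset.card_compl]

noncomputable def FwdFun
    (x : {G : SimpleGraph (Fin n) // IsSplit G ∧ ¬ IsBalanced G}) :
    Σ t : Fin n, {G : SimpleGraph (Fin t.val) // IsSplit G} := by
  refine ⟨⟨n - (fwdDel x.1 x.2.1 x.2.2).card, ?_⟩,
    relabel (x.1.induce (↑((fwdDel x.1 x.2.1 x.2.2)ᶜ : Finset (Fin n)) : Set (Fin n)))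
      (Fintype.equivFinOfCardEq (card_compl_coe _)), ?_⟩
  · have h1 := fwdDel_card_pos x.1 x.2.1 x.2.2
    have h2 := n_pos_of_unbalanced x.1 x.2.1 x.2.2
    omega
  · apply (relabelIso _ _).isSplit
    exact ⟨_, _, ind_partition (fwdD_spec x.1 x.2.1 x.2.2).1⟩

lemma fwd_resp (x y : {G : SimpleGraph (Fin n) // IsSplit G ∧ ¬ IsBalanced G})
    (h : USplitIsoRel n x y) : SmallSplitRel n (FwdFun x) (FwdFun y) := by
  obtain ⟨ψ⟩ := h
  have hx := fwdD_spec x.1 x.2.1 x.2.2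
  have hy := fwdD_spec y.1 y.2.1 y.2.2
  obtain ⟨ι⟩ := fwd_indep ψ hx.1 hx.2.1 hx.2.2.1 hx.2.2.2 hy.1 hy.2.1 hy.2.2.1 hy.2.2.2
  exact ⟨((relabelIso _ _).symm.trans ι).trans (relabelIso _ _)⟩

lemma bwd_exists (t : ℕ) (H : SimpleGraph (Fin t)) (h : IsSplit H) :
    ∃ d : Finset (Fin t) × Finset (Fin t), IsKSPartition H d.1 d.2 ∧ d.2.card = alphaNum H := by
  obtain ⟨A, B, hp, hS⟩ := smax_exists h
  exact ⟨(A, B), hp, hS⟩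

noncomputable def bwdD (t : ℕ) (H : SimpleGraph (Fin t)) (h : IsSplit H) :
    Finset (Fin t) × Finset (Fin t) :=
  Classical.choose (bwd_exists t H h)

lemma bwdD_spec (t : ℕ) (H : SimpleGraph (Fin t)) (h : IsSplit H) :
    IsKSPartition H (bwdD t H h).1 (bwdD t H h).2 ∧ (bwdD t H h).2.card = alphaNum H :=
  Classical.choose_spec (bwd_exists t H h)

noncomputable def sumFinEquiv (t : ℕ) (h : t < n) : (Fin t ⊕ Fin (n - t)) ≃ Fin n :=
  finSumFinEquiv.trans (finCongr (by omega))

noncomputable def BwdFun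
    (y : Σ t : Fin n, {G : SimpleGraph (Fin t.val) // IsSplit G}) :
    {G : SimpleGraph (Fin n) // IsSplit G ∧ ¬ IsBalanced G} := by
  have hm : 0 < n - y.1.val := by have := y.1.isLt; omega
  refine ⟨relabel (addOn y.2.1 (bwdD y.1.val y.2.1 y.2.2).1 (n - y.1.val))
    (sumFinEquiv y.1.val y.1.isLt), ?_, ?_⟩
  · apply (relabelIso _ _).isSplit
    exact ⟨_, _, addOn_partition (bwdD_spec y.1.val y.2.1 y.2.2).1 ⟨0, hm⟩⟩
  · intro hbal
    exact addOn_unbalanced (bwdD_spec y.1.val y.2.1 y.2.2).1 hm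
      ((relabelIso _ _).symm.isBalanced hbal)

lemma bwd_resp (x y : Σ t : Fin n, {G : SimpleGraph (Fin t.val) // IsSplit G})
    (h : SmallSplitRel n x y) : USplitIsoRel n (BwdFun x) (BwdFun y) := by
  obtain ⟨ψ⟩ := h
  have hx := bwdD_spec x.1.val x.2.1 x.2.2
  have hy := bwdD_spec y.1.val y.2.1 y.2.2
  have htt : x.1.val = y.1.val := by
    have := Fintype.card_congr ψ.toEquiv
    simpa using this
  have hmm : n - x.1.val = n - y.1.val := by omega
  have key : Nonempty (addOn x.2.1 (bwdD x.1.val x.2.1 x.2.2).1 (n - x.1.val) ≃g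
      addOn y.2.1 (bwdD y.1.val y.2.1 y.2.2).1 (n - y.1.val)) := by
    rw [hmm]
    exact bwd_indep ψ hx.1 hx.2 hy.1 hy.2 (n - y.1.val)
  obtain ⟨ι⟩ := key
  exact ⟨((relabelIso _ _).symm.trans ι).trans (relabelIso _ _)⟩

/-- Round trip 2: Bwd ∘ Fwd is the identity up to isomorphism. -/
lemma round_trip2 (x : {G : SimpleGraph (Fin n) // IsSplit G ∧ ¬ IsBalanced G}) :
    USplitIsoRel n (BwdFun (FwdFun x)) x := by
  set G := x.1 with hG
  have hspec := fwdD_spec x.1 x.2.1 x.2.2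
  set K := (fwdD x.1 x.2.1 x.2.2).1
  set S := (fwdD x.1 x.2.1 x.2.2).2.1
  set s := (fwdD x.1 x.2.1 x.2.2).2.2
  obtain ⟨hp, hS, hs, hsw⟩ := hspec
  set D : Finset (Fin n) := fwdDel x.1 x.2.1 x.2.2 with hD
  set H₀ := x.1.induce (↑(Dᶜ : Finset (Fin n)) : Set (Fin n)) with hH₀
  set e₁ : (↑(Dᶜ : Finset (Fin n)) : Set (Fin n)) ≃ Fin (n - D.card) :=
    Fintype.equivFinOfCardEq (card_compl_coe _) with he₁
  -- the small graph produced by FwdFun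
  set y := FwdFun x with hy
  have hyH : y.2.1 = relabel H₀ e₁ := rfl
  have hyt : y.1.val = n - D.card := rfl
  -- data chosen by BwdFun
  have hbspec := bwdD_spec y.1.val y.2.1 y.2.2
  -- canonical S-max partition of H₀ transported to the relabelled graph
  have hpInd : IsKSPartition H₀ (indK x.1 K S s) (indS x.1 K S s) := ind_partition hp
  have hsmaxInd : (indS x.1 K S s).card = alphaNum H₀ := ind_smax hp hs
  have hρ : relabel H₀ e₁ ≃g H₀ := (relabelIso H₀ e₁).symm
  have hpInd' : IsKSPartition (relabel H₀ e₁) ((indK x.1 K S s).image ⇑hρ.symm)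
      ((indS x.1 K S s).image ⇑hρ.symm) := hρ.symm.image_partition hpInd
  have hsmaxInd' : ((indS x.1 K S s).image ⇑hρ.symm).card = alphaNum (relabel H₀ e₁) := by
    exact (Finset.card_image_of_injective _ hρ.symm.injective).trans (hsmaxInd.trans hρ.symm.alpha_eq)
  -- independence of choice in the backward direction
  have key : Nonempty (addOn y.2.1 (bwdD y.1.val y.2.1 y.2.2).1 (n - y.1.val) ≃g
      addOn H₀ (indK x.1 K S s) (n - y.1.val)) := by
    refine bwd_indep (H := y.2.1) ?_ hbspec.1 hbspec.2 hpInd hsmaxInd (n - y.1.val)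
    exact hρ
  have hcard : n - y.1.val = D.card := by
    have h1 : D.card ≤ n := by rw [hD]; exact fwdDel_card_le x.1 x.2.1 x.2.2
    have h0 : 0 < D.card := by rw [hD]; exact fwdDel_card_pos x.1 x.2.1 x.2.2
    have h2 : y.1.val = n - D.card := rfl
    omega
  obtain ⟨ι⟩ := key
  have ι₂ : addOn H₀ (indK x.1 K S s) (n - y.1.val) ≃g x.1 := by
    rw [hcard]
    exact reconIso hp hs hsw
  exact ⟨((relabelIso _ _).symm.trans ι).trans ι₂⟩

/-- Round trip 1: Fwd ∘ Bwd is the identity up to isomorphism. -/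
lemma round_trip1 (y : Σ t : Fin n, {G : SimpleGraph (Fin t.val) // IsSplit G}) :
    SmallSplitRel n (FwdFun (BwdFun y)) y := by
  have hm : 0 < n - y.1.val := by have := y.1.isLt; omega
  set H := y.2.1 with hH
  have hbspec := bwdD_spec y.1.val y.2.1 y.2.2
  set A := (bwdD y.1.val y.2.1 y.2.2).1 with hA
  set B := (bwdD y.1.val y.2.1 y.2.2).2 with hB
  obtain ⟨hpH, hSH⟩ := hbspec
  set m := n - y.1.val with hmdef
  set r : Fin m := ⟨0, hm⟩ with hr
  set Gstar := addOn H A m with hGstar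
  set e₃ := sumFinEquiv y.1.val y.1.isLt with he₃
  set x' := BwdFun y with hx'
  have ρ : Gstar ≃g x'.1 := relabelIso Gstar e₃
  obtain ⟨hp₂, hS₂, hs₂, hsw₂⟩ := fwdD_spec x'.1 x'.2.1 x'.2.2
  -- canonical transported data on x'.1
  have hpc : IsKSPartition x'.1 ((KstF A m r).image ⇑ρ) ((SstF B m r).image ⇑ρ) :=
    ρ.image_partition (addOn_partition hpH r)
  have hSc : ((SstF B m r).image ⇑ρ).card = alphaNum x'.1 := by
    rw [Finset.card_image_of_injective _ ρ.injective, addOn_smax hpH r]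
    exact ρ.alpha_eq
  have hsc : ρ (Sum.inr r) ∈ (SstF B m r).image ⇑ρ :=
    Finset.mem_image_of_mem _ (mem_SstF.mpr (Or.inr rfl))
  have hswc : ∀ k ∈ (KstF A m r).image ⇑ρ, x'.1.Adj (ρ (Sum.inr r)) k :=
    swing_image ρ (addOn_swing hpH r)
  obtain ⟨ι⟩ := fwd_indep (idIso x'.1) hp₂ hS₂ hs₂ hsw₂ hpc hSc hsc hswc
  have hdel : delSet x'.1 ((KstF A m r).image ⇑ρ) ((SstF B m r).image ⇑ρ) (ρ (Sum.inr r))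
      = (Finset.univ.image Sum.inr).image ⇑ρ := by
    rw [delSet_image ρ, addOn_delSet hpH hSH r]
  have ι₃ : x'.1.induce (↑((delSet x'.1 ((KstF A m r).image ⇑ρ) ((SstF B m r).image ⇑ρ)
      (ρ (Sum.inr r)))ᶜ) : Set (Fin n)) ≃g H := by
    rw [hdel]
    exact (induceIso ρ (Finset.univ.image Sum.inr)).symm.trans (addOn_del_iso H A m).symm
  exact ⟨((relabelIso _ _).symm.trans ι).trans ι₃⟩

end Assembly

/-- Compilation theorem for split graphs: there is a bijection between isomorphism
classes of unbalanced split graphs on `n` vertices and isomorphism classes of split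
graphs on `t` vertices, `0 ≤ t ≤ n − 1`. -/
theorem split_compilation (n : ℕ) :
    Nonempty (Quot (USplitIsoRel n) ≃ Quot (SmallSplitRel n)) := by
  refine ⟨⟨Quot.lift (fun x => Quot.mk _ (FwdFun x)) (fun a b h => Quot.sound (fwd_resp a b h)),
          Quot.lift (fun y => Quot.mk _ (BwdFun y)) (fun a b h => Quot.sound (bwd_resp a b h)),
          ?_, ?_⟩⟩
  · intro q
    induction q using Quot.ind with
    | _ x => exact Quot.sound (round_trip2 x)
  · intro q
    induction q using Quot.ind with
    | _ y => exact Quot.sound (round_trip1 y)
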